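/- Define f : [-1,1]ⁿ → ℝ by f(x) = (∏ᵢ T_d(xᵢ + α/d²)) / (T_d(1 + α/d²))^{n−1}, where T_d is the Chebyshev polynomial of the first kind and α > 0. Then for every x ∈ [-1,1]ⁿ \ [1 − α/d², 1]ⁿ, |f(x)| ≤ 1, while f(1,…,1) = T_d(1 + α/d²). -/

import Mathlib

open Set

section Aux
open Polynomial.Chebyshev Polynomial

lemma cheb_aux (x y : ℝ) (hx : 1 ≤ x) (hxy : x ≤ y) :
    ∀ n : ℕ, (1 ≤ (T ℝ n).eval x ∧ (T ℝ n).eval x ≤ (T ℝ n).eval y) ∧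
      ((T ℝ n).eval x ≤ (T ℝ (n + 1 : ℕ)).eval x ∧
       (T ℝ n).eval y - (T ℝ n).eval x ≤ (T ℝ (n + 1 : ℕ)).eval y - (T ℝ (n + 1 : ℕ)).eval x) := by
  intro n
  induction n with
  | zero => simp [T_zero, T_one]; constructor <;> nlinarith
  | succ n ih =>
    obtain ⟨⟨h1, h2⟩, h3, h4⟩ := ih
    have e2 : ((n + 2 : ℕ) : ℤ) = (n : ℤ) + 2 := by push_cast; ring
    have hx2 : (T ℝ ((n + 2 : ℕ))).eval x = 2 * x * (T ℝ (n + 1 : ℕ)).eval x - (T ℝ n).eval x := by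
      rw [e2, T_add_two]; push_cast; simp
    have hy2 : (T ℝ ((n + 2 : ℕ))).eval y = 2 * y * (T ℝ (n + 1 : ℕ)).eval y - (T ℝ n).eval y := by
      rw [e2, T_add_two]; push_cast; simp
    refine ⟨⟨by linarith, by linarith⟩, ?_, ?_⟩
    · rw [hx2]; nlinarith
    · rw [hx2, hy2]; nlinarith

lemma cheb_abs_le_one (z : ℝ) (hz : z ∈ Set.Icc (-1:ℝ) 1) (n : ℤ) :
    |(T ℝ n).eval z| ≤ 1 := by
  have h1 : Real.cos (Real.arccos z) = z := Real.cos_arccos hz.1 hz.2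
  rw [← h1, T_real_cos]
  exact Real.abs_cos_le_one _

end Aux

open Polynomial.Chebyshev Polynomial in
/-- For `f(x) = (∏ᵢ T_d(xᵢ + α/d²)) / T_d(1 + α/d²)^{n−1}` on `[-1,1]ⁿ`:
outside the corner box `[1 − α/d², 1]ⁿ` one has `|f| ≤ 1`, while
`f(1,…,1) = T_d(1 + α/d²)`. -/
theorem stmt16 (n d : ℕ) (hn : 1 ≤ n) (hd : 1 ≤ d) (α : ℝ) (hα : 0 < α) :
    (∀ x : Fin n → ℝ,
      x ∈ Set.pi Set.univ (fun _ : Fin n => Icc (-1 : ℝ) 1) →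
      x ∉ Set.pi Set.univ (fun _ : Fin n => Icc (1 - α / (d : ℝ) ^ 2) 1) →
      |(∏ i, (Polynomial.Chebyshev.T ℝ d).eval (x i + α / (d : ℝ) ^ 2)) /
          ((Polynomial.Chebyshev.T ℝ d).eval (1 + α / (d : ℝ) ^ 2)) ^ (n - 1)|
        ≤ 1) ∧
    (∏ _i : Fin n, (Polynomial.Chebyshev.T ℝ d).eval (1 + α / (d : ℝ) ^ 2)) /
        ((Polynomial.Chebyshev.T ℝ d).eval (1 + α / (d : ℝ) ^ 2)) ^ (n - 1) =
      (Polynomial.Chebyshev.T ℝ d).eval (1 + α / (d : ℝ) ^ 2) := by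
  set c : ℝ := α / (d : ℝ) ^ 2 with hc_def
  have hd0 : (0:ℝ) < (d : ℝ) ^ 2 := by positivity
  have hc : 0 < c := div_pos hα hd0
  set M : ℝ := (T ℝ d).eval (1 + c) with hM_def
  have hM1 : 1 ≤ M := ((cheb_aux (1 + c) (1 + c) (by linarith) le_rfl d).1).1
  have hM0 : 0 < M := lt_of_lt_of_le one_pos hM1
  constructor
  · intro x hx hbox
    simp only [Set.mem_pi, Set.mem_univ, Set.mem_Icc, forall_true_left] at hx hbox
    push_neg at hbox
    obtain ⟨i, hi⟩ := hbox
    have hxi : x i < 1 - c := by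
      rcases lt_or_ge (x i) (1 - c) with h | h
      · exact h
      · exact absurd ((hx i).2) (by simpa using hi h |>.not_ge)
    -- each factor bounded by M
    have hall : ∀ j, |(T ℝ d).eval (x j + c)| ≤ M := by
      intro j
      rcases le_or_gt (x j + c) 1 with h | h
      · exact le_trans (cheb_abs_le_one _ ⟨by linarith [(hx j).1], h⟩ d) hM1
      · have h1 := cheb_aux (x j + c) (1 + c) h.le (by linarith [(hx j).2]) d
        rw [abs_of_nonneg (by linarith [h1.1.1])]
        exact h1.1.2
    have hi1 : |(T ℝ d).eval (x i + c)| ≤ 1 :=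
      cheb_abs_le_one _ ⟨by linarith [(hx i).1], by linarith⟩ d
    have hprod : |∏ j, (T ℝ d).eval (x j + c)| ≤ M ^ (n - 1) := by
      rw [Finset.abs_prod, ← Finset.mul_prod_erase Finset.univ _ (Finset.mem_univ i)]
      have hcard : (Finset.univ.erase i).card = n - 1 := by
        rw [Finset.card_erase_of_mem (Finset.mem_univ i)]; simp
      calc |(T ℝ d).eval (x i + c)| * ∏ j ∈ Finset.univ.erase i, |(T ℝ d).eval (x j + c)|
          ≤ 1 * ∏ j ∈ Finset.univ.erase i, M := by
            apply mul_le_mul hi1 _ (Finset.prod_nonneg fun j _ => abs_nonneg _) zero_le_one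
            exact Finset.prod_le_prod (fun j _ => abs_nonneg _) (fun j _ => hall j)
        _ = M ^ (n - 1) := by rw [one_mul, Finset.prod_const, hcard]
    rw [abs_div, abs_of_pos (pow_pos hM0 (n - 1))]
    rw [div_le_one (pow_pos hM0 (n - 1))]
    exact hprod
  · rw [Finset.prod_const, Finset.card_univ, Fintype.card_fin,
      div_eq_iff (pow_ne_zero _ hM0.ne')]
    have hn1 : n = (n - 1) + 1 := by omega
    conv_lhs => rw [hn1]
    rw [pow_succ, mul_comm]
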